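/- arXiv:2405.03385 — 4 statements merged into one kernel-verified Lean document; each statement's English description precedes it below -/
import Mathlib

section
/- Every maximizer of the orthogonality score over the unit sphere is a wall normal: if u ∈ ℝ³ satisfies ‖u‖ = 1 and J₃(v) ≤ J₃(u) for every v ∈ ℝ³ with ‖v‖ = 1, then u = eᵢ or u = −eᵢ for some i ∈ {1, 2, 3}. -/
open scoped RealInnerProductSpace

/-- The image-source grid `G`: points `(ε₁d₁ + 2q₁L₁, ε₂d₂ + 2q₂L₂, ε₃d₃ + 2q₃L₃)`
with `εᵢ ∈ {-1, 1}` and `qᵢ ∈ {0, …, Nᵢ/2 - 1}`. -/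
noncomputable def grid3 (L d : Fin 3 → ℝ) (N : Fin 3 → ℕ) : Set (EuclideanSpace ℝ (Fin 3)) :=
  {x | ∃ (ε : Fin 3 → ℝ) (q : Fin 3 → ℤ),
    (∀ i, ε i = 1 ∨ ε i = -1) ∧
    (∀ i, 0 ≤ q i ∧ q i < (N i / 2 : ℕ)) ∧
    (∀ i, x i = ε i * d i + 2 * (q i : ℝ) * L i)}

/-- The orthogonality score `J₃(u)`: the number of ordered pairs `(s, p) ∈ G × G`
with `⟨u, s - p⟩ = 0`. -/
noncomputable def J3 (L d : Fin 3 → ℝ) (N : Fin 3 → ℕ) (u : EuclideanSpace ℝ (Fin 3)) : ℕ :=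
  {sp : EuclideanSpace ℝ (Fin 3) × EuclideanSpace ℝ (Fin 3) |
    sp.1 ∈ grid3 L d N ∧ sp.2 ∈ grid3 L d N ∧ ⟪u, sp.1 - sp.2⟫ = 0}.ncard

/-- The pair set underlying `J3`. -/
def pairSet (L d : Fin 3 → ℝ) (N : Fin 3 → ℕ) (u : EuclideanSpace ℝ (Fin 3)) :
    Set (EuclideanSpace ℝ (Fin 3) × EuclideanSpace ℝ (Fin 3)) :=
  {sp | sp.1 ∈ grid3 L d N ∧ sp.2 ∈ grid3 L d N ∧ ⟪u, sp.1 - sp.2⟫ = 0}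

lemma J3_eq (L d : Fin 3 → ℝ) (N : Fin 3 → ℕ) (u : EuclideanSpace ℝ (Fin 3)) :
    J3 L d N u = (pairSet L d N u).ncard := rfl

lemma grid3_finite (L d : Fin 3 → ℝ) (N : Fin 3 → ℕ) : (grid3 L d N).Finite := by
  apply Set.Finite.subset ((Set.Finite.pi (t := fun i : Fin 3 =>
    (fun p : ℝ × ℤ => p.1 * d i + 2 * (p.2 : ℝ) * L i) ''
      (({-1, 1} : Set ℝ) ×ˢ (Set.Icc (0:ℤ) (N i / 2))))
    (fun i => ((((Set.finite_singleton (1:ℝ)).insert (-1))).prod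
      (Set.finite_Icc (0:ℤ) (N i / 2))).image _)).image (WithLp.toLp 2))
  rintro x ⟨ε, q, hε, hq, hx⟩
  refine ⟨x.ofLp, ?_, rfl⟩
  intro i _
  refine ⟨(ε i, q i), ⟨?_, ?_⟩, (hx i).symm⟩
  · rcases hε i with h | h <;> simp [h]
  · exact ⟨(hq i).1, le_of_lt (hq i).2⟩

lemma pairSet_finite (L d : Fin 3 → ℝ) (N : Fin 3 → ℕ) (u : EuclideanSpace ℝ (Fin 3)) :
    (pairSet L d N u).Finite := by
  apply Set.Finite.subset ((grid3_finite L d N).prod (grid3_finite L d N))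
  rintro ⟨s, p⟩ ⟨hs, hp, _⟩
  exact ⟨hs, hp⟩

/-- coordinate update inside EuclideanSpace -/
noncomputable def upd (x : EuclideanSpace ℝ (Fin 3)) (i : Fin 3) (v : ℝ) :
    EuclideanSpace ℝ (Fin 3) := WithLp.toLp 2 (fun k => if k = i then v else x k)

lemma upd_apply (x : EuclideanSpace ℝ (Fin 3)) (i : Fin 3) (v : ℝ) (k : Fin 3) :
    upd x i v k = if k = i then v else x k := rfl

lemma grid3_upd (L d : Fin 3 → ℝ) (N : Fin 3 → ℕ) {x y : EuclideanSpace ℝ (Fin 3)}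
    (hx : x ∈ grid3 L d N) (hy : y ∈ grid3 L d N) (i : Fin 3) :
    upd x i (y i) ∈ grid3 L d N := by
  obtain ⟨ε, q, hε, hq, hxe⟩ := hx
  obtain ⟨ε', q', hε', hq', hye⟩ := hy
  refine ⟨fun k => if k = i then ε' i else ε k, fun k => if k = i then q' i else q k,
    fun k => ?_, fun k => ?_, fun k => ?_⟩
  · dsimp only; by_cases h : k = i
    · rw [if_pos h]; exact hε' i
    · rw [if_neg h]; exact hε k
  · dsimp only; by_cases h : k = i
    · rw [if_pos h, h]; exact hq' i
    · rw [if_neg h]; exact hq k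
  · rw [upd_apply]; dsimp only; by_cases h : k = i
    · rw [if_pos h, if_pos h, if_pos h, h]; exact hye i
    · rw [if_neg h, if_neg h, if_neg h]; exact hxe k

lemma halfN_pos (N : Fin 3 → ℕ) (hN : ∀ i, 0 < N i ∧ Even (N i)) (i : Fin 3) :
    1 ≤ N i / 2 := by
  obtain ⟨hpos, k, hk⟩ := hN i
  omega

lemma grid3_le (L d : Fin 3 → ℝ) (N : Fin 3 → ℕ)
    (hL : ∀ i, 0 < L i) (hd : ∀ i, 0 < d i ∧ d i < L i)
    {x : EuclideanSpace ℝ (Fin 3)} (hx : x ∈ grid3 L d N) (i : Fin 3) :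
    x i ≤ d i + 2 * ((N i / 2 : ℕ) - 1 : ℝ) * L i := by
  obtain ⟨ε, q, hε, hq, hxe⟩ := hx
  rw [hxe i]
  have h1 : ε i * d i ≤ d i := by
    rcases hε i with h | h <;> rw [h] <;> nlinarith [(hd i).1]
  have h3 : q i ≤ ((N i / 2 : ℕ) : ℤ) - 1 := by have := (hq i).2; omega
  have h2 : (q i : ℝ) ≤ ((N i / 2 : ℕ) : ℝ) - 1 := by exact_mod_cast h3
  have h4 : 2 * (q i : ℝ) * L i ≤ 2 * (((N i / 2 : ℕ) : ℝ) - 1) * L i := by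
    nlinarith [hL i, h2]
  linarith

lemma inner_expand (u x : EuclideanSpace ℝ (Fin 3)) : ⟪u, x⟫ = ∑ k, u k * x k := by
  simp [PiLp.inner_apply, RCLike.inner_apply, mul_comm]

lemma J3_lt (L d : Fin 3 → ℝ) (N : Fin 3 → ℕ)
    (hL : ∀ i, 0 < L i) (hd : ∀ i, 0 < d i ∧ d i < L i)
    (hN : ∀ i, 0 < N i ∧ Even (N i)) (u : EuclideanSpace ℝ (Fin 3))
    {i j : Fin 3} (hij : i ≠ j) (hui : u i ≠ 0) (huj : u j ≠ 0) :
    J3 L d N u < J3 L d N (EuclideanSpace.single i 1) := by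
  rw [J3_eq, J3_eq]
  set φ : (EuclideanSpace ℝ (Fin 3) × EuclideanSpace ℝ (Fin 3)) →
      (EuclideanSpace ℝ (Fin 3) × EuclideanSpace ℝ (Fin 3)) :=
    fun sp => (upd sp.1 i (sp.2 i), sp.2) with hφ
  have hsub : φ '' pairSet L d N u ⊆ pairSet L d N (EuclideanSpace.single i 1) := by
    rintro _ ⟨⟨s, p⟩, ⟨hs, hp, _⟩, rfl⟩
    refine ⟨grid3_upd L d N hs hp i, hp, ?_⟩
    rw [EuclideanSpace.inner_single_left]
    simp [hφ, PiLp.sub_apply, upd_apply]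
  have hinj : Set.InjOn φ (pairSet L d N u) := by
    rintro ⟨s, p⟩ ⟨hs, hp, hsp⟩ ⟨t, q⟩ ⟨ht, hq, htq⟩ heq
    simp only [hφ, Prod.mk.injEq] at heq
    obtain ⟨h1, h2⟩ := heq
    subst h2
    have hcoord : ∀ k, k ≠ i → s k = t k := by
      intro k hk
      simpa [upd_apply, hk] using congrArg (fun f => f k) h1
    rw [inner_expand] at hsp htq
    have hsum : ∑ k, u k * (s k - t k) = 0 := by
      have h3 : (∑ k, u k * ((s - p) k)) - (∑ k, u k * ((t - p) k)) = 0 := by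
        rw [hsp, htq]; ring
      rw [← Finset.sum_sub_distrib] at h3
      rw [← h3]
      apply Finset.sum_congr rfl
      intro k _
      simp only [PiLp.sub_apply]
      ring
    have h4 : ∑ k, u k * (s k - t k) = u i * (s i - t i) :=
      Finset.sum_eq_single i (fun k _ hk => by rw [hcoord k hk]; ring) (by simp)
    have hsi : s i = t i := by
      have h5 : u i * (s i - t i) = 0 := by rw [← h4]; exact hsum
      rcases mul_eq_zero.mp h5 with h | h
      · exact absurd h hui
      · linarith
    have hst : s = t := by
      ext k
      by_cases hk : k = i
      · rw [hk]; exact hsi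
      · exact hcoord k hk
    rw [hst]
  -- the missing pair
  set σ : ℝ := if 0 < u i * u j then -1 else 1 with hσdef
  have hσ : σ = 1 ∨ σ = -1 := by
    rw [hσdef]; split <;> simp
  have hσneg : σ * (u i * u j) < 0 := by
    rcases lt_trichotomy (u i * u j) 0 with h | h | h
    · have hs1 : σ = 1 := by rw [hσdef, if_neg (by linarith)]
      rw [hs1]; linarith
    · rcases mul_eq_zero.mp h with h' | h'
      · exact absurd h' hui
      · exact absurd h' huj
    · have hs1 : σ = -1 := by rw [hσdef, if_pos h]
      rw [hs1]; linarith
  set pstar : EuclideanSpace ℝ (Fin 3) :=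
    WithLp.toLp 2 (fun k => (if k = j then -σ else 1) * d k +
      2 * (if k = i then ((N i / 2 : ℕ) : ℝ) - 1 else 0) * L k) with hpstar
  set sstar : EuclideanSpace ℝ (Fin 3) := upd pstar j (σ * d j) with hsstar
  have hpj : pstar j = -σ * d j := by
    rw [hpstar]; simp [hij, Ne.symm hij]
  have hpi : pstar i = d i + 2 * (((N i / 2 : ℕ) : ℝ) - 1) * L i := by
    rw [hpstar]; simp [hij]
  have hpk : ∀ k, k ≠ i → k ≠ j → pstar k = d k := by
    intro k hki hkj
    rw [hpstar]; simp [hki, hkj]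
  have hQpos : (1 : ℤ) ≤ ((N i / 2 : ℕ) : ℤ) := by exact_mod_cast halfN_pos N hN i
  have hpmem : pstar ∈ grid3 L d N := by
    refine ⟨fun k => if k = j then -σ else 1,
      fun k => if k = i then ((N i / 2 : ℕ) : ℤ) - 1 else 0,
      fun k => ?_, fun k => ?_, fun k => ?_⟩
    · dsimp only; split
      · rcases hσ with h | h <;> rw [h]
        · right; norm_num
        · left; norm_num
      · left; rfl
    · dsimp only; by_cases hk : k = i
      · subst hk; rw [if_pos rfl]; omega
      · rw [if_neg hk]
        refine ⟨le_refl 0, ?_⟩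
        exact_mod_cast halfN_pos N hN k
    · rw [hpstar]; dsimp only
      by_cases hk : k = i
      · rw [hk, if_pos rfl, if_pos rfl]
        simp only [Int.cast_sub, Int.cast_one, Int.cast_natCast]
      · rw [if_neg hk, if_neg hk]
        simp only [Int.cast_zero]
  have hsmem : sstar ∈ grid3 L d N := by
    refine ⟨fun k => if k = j then σ else 1,
      fun k => if k = i then ((N i / 2 : ℕ) : ℤ) - 1 else 0,
      fun k => ?_, fun k => ?_, fun k => ?_⟩
    · dsimp only; split
      · exact hσ
      · left; rfl
    · dsimp only; by_cases hk : k = i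
      · subst hk; rw [if_pos rfl]; omega
      · rw [if_neg hk]
        refine ⟨le_refl 0, ?_⟩
        exact_mod_cast halfN_pos N hN k
    · rw [hsstar, upd_apply, hpstar]; dsimp only
      by_cases hkj : k = j
      · rw [if_pos hkj, if_pos hkj]
        have : k ≠ i := by rw [hkj]; exact Ne.symm hij
        rw [if_neg this, hkj]
        simp only [Int.cast_zero]
        ring
      · rw [if_neg hkj, if_neg hkj, if_neg hkj]
        by_cases hk : k = i
        · rw [if_pos hk, if_pos hk]
          simp only [Int.cast_sub, Int.cast_one, Int.cast_natCast]
        · rw [if_neg hk, if_neg hk]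
          simp only [Int.cast_zero]
  have hmem : (sstar, pstar) ∈ pairSet L d N (EuclideanSpace.single i 1) := by
    refine ⟨hsmem, hpmem, ?_⟩
    rw [EuclideanSpace.inner_single_left]
    simp only [PiLp.sub_apply]
    rw [hsstar, upd_apply, if_neg hij]
    ring
  have hnotin : (sstar, pstar) ∉ φ '' pairSet L d N u := by
    rintro ⟨⟨s, p⟩, ⟨hs, hp, hsp⟩, heq⟩
    simp only [hφ, Prod.mk.injEq] at heq
    obtain ⟨h1, h2⟩ := heq
    subst h2
    have hcoord : ∀ k, k ≠ i → s k = sstar k := by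
      intro k hk
      simpa [upd_apply, hk] using congrArg (fun f => f k) h1
    rw [inner_expand] at hsp
    simp only [PiLp.sub_apply] at hsp
    have hred : ∑ k, u k * (s k - pstar k) = u i * (s i - pstar i) + u j * (s j - pstar j) := by
      have hss : ∑ k ∈ ({i, j} : Finset (Fin 3)), u k * (s k - pstar k)
          = ∑ k, u k * (s k - pstar k) := by
        apply Finset.sum_subset (Finset.subset_univ {i, j})
        intro k _ hk
        have hki : k ≠ i := fun h => hk (by simp [h])
        have hkj : k ≠ j := fun h => hk (by simp [h])
        have h6 : s k = pstar k := by
          rw [hcoord k hki, hsstar, upd_apply, if_neg hkj]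
        rw [h6]; ring
      rw [← hss, Finset.sum_pair hij]
    have hsj : s j = σ * d j := by
      rw [hcoord j (Ne.symm hij), hsstar, upd_apply, if_pos rfl]
    have h5 : u i * (s i - pstar i) = -(2 * σ * (u j * d j)) := by
      have h7 : u i * (s i - pstar i) + u j * (s j - pstar j) = 0 := by
        rw [← hred]; exact hsp
      rw [hsj, hpj] at h7
      linarith
    have hle : s i ≤ pstar i := by
      rw [hpi]
      exact grid3_le L d N hL hd hs i
    have h8 := congrArg (fun t => u i * t) h5
    simp only at h8
    nlinarith [h8, hσneg, (hd j).1, hle, sq_nonneg (u i)]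
  have hfin := pairSet_finite L d N (EuclideanSpace.single i 1)
  calc (pairSet L d N u).ncard
      = (φ '' pairSet L d N u).ncard := (Set.ncard_image_of_injOn hinj).symm
    _ < (pairSet L d N (EuclideanSpace.single i 1)).ncard :=
        Set.ncard_lt_ncard ((Set.ssubset_iff_of_subset hsub).mpr
          ⟨(sstar, pstar), hmem, hnotin⟩) hfin

/-- Every maximizer of the orthogonality score over the unit sphere is a wall normal. -/
theorem maximizer_is_wall_normal (L d : Fin 3 → ℝ) (N : Fin 3 → ℕ)
    (hL : ∀ i, 0 < L i) (hd : ∀ i, 0 < d i ∧ d i < L i)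
    (hN : ∀ i, 0 < N i ∧ Even (N i))
    (u : EuclideanSpace ℝ (Fin 3)) (hu : ‖u‖ = 1)
    (hmax : ∀ v : EuclideanSpace ℝ (Fin 3), ‖v‖ = 1 → J3 L d N v ≤ J3 L d N u) :
    ∃ i : Fin 3, u = EuclideanSpace.single i 1 ∨ u = -EuclideanSpace.single i 1 := by
  have hex : ∃ i, u i ≠ 0 := by
    by_contra h
    push_neg at h
    have hu0 : u = 0 := by
      ext k; simpa using h k
    rw [hu0] at hu
    simp at hu
  obtain ⟨i, hi⟩ := hex
  have hz : ∀ j, j ≠ i → u j = 0 := by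
    intro j hj
    by_contra hj0
    have hlt := J3_lt L d N hL hd hN u (Ne.symm hj) hi hj0
    have hle := hmax (EuclideanSpace.single i 1) (by simp [EuclideanSpace.norm_single])
    exact absurd hlt (not_lt.mpr hle)
  have hform : u = EuclideanSpace.single i (u i) := by
    ext k
    by_cases hk : k = i
    · subst hk; simp [EuclideanSpace.single_apply]
    · rw [hz k hk]
      simp [EuclideanSpace.single_apply, hk]
  have habs : |u i| = 1 := by
    rw [hform] at hu
    simpa [EuclideanSpace.norm_single] using hu
  rcases (abs_eq (by norm_num : (0:ℝ) ≤ 1)).mp habs with h1 | h1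
  · exact ⟨i, Or.inl (by rw [hform, h1])⟩
  · refine ⟨i, Or.inr ?_⟩
    rw [hform, h1]
    ext k
    by_cases hk : k = i
    · subst hk
      simp [EuclideanSpace.single_apply, PiLp.neg_apply]
    · simp [EuclideanSpace.single_apply, PiLp.neg_apply, hk]
end

section
/- If u ∈ ℝ³ satisfies u₂ ≠ 0 and u₃ ≠ 0, then for every s ∈ ℝ³, the affine plane {p ∈ ℝ³ : ⟨u, p − s⟩ = 0} with normal u passing through s contains at most N₁·min(N₂, N₃) points of G. -/
open scoped RealInnerProductSpace

lemma grid_card_aux (L d : Fin 3 → ℝ) (N : Fin 3 → ℕ) (hN : ∀ i, Even (N i))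
    (S : Set (EuclideanSpace ℝ (Fin 3))) (hS : S ⊆ grid3 L d N)
    (i j : Fin 3) (hinj : ∀ p ∈ S, ∀ q ∈ S, p i = q i → p j = q j → p = q) :
    S.ncard ≤ N i * N j := by
  set V : Fin 3 → Finset ℝ := fun m =>
    (({1, -1} : Finset ℝ) ×ˢ Finset.Ico (0 : ℤ) ((N m / 2 : ℕ) : ℤ)).image
      (fun p => p.1 * d m + 2 * (p.2 : ℝ) * L m) with hV
  have hmem : ∀ x ∈ S, ∀ m, x m ∈ V m := by
    rintro x hx m
    obtain ⟨ε, q, hε, hq, hx'⟩ := hS hx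
    refine Finset.mem_image.mpr ⟨(ε m, q m), ?_, (hx' m).symm⟩
    refine Finset.mem_product.mpr ⟨?_, Finset.mem_Ico.mpr ⟨(hq m).1, (hq m).2⟩⟩
    rcases hε m with h | h <;> simp [h]
  have hVcard : ∀ m, (V m).card ≤ N m := by
    intro m
    calc (V m).card ≤ _ := Finset.card_image_le
      _ = 2 * (N m / 2) := by
          rw [Finset.card_product, Int.card_Ico, sub_zero, Int.toNat_natCast]
          norm_num
      _ = N m := Nat.two_mul_div_two_of_even (hN m)
  have h1 : S.ncard ≤ ((V i ×ˢ V j : Finset (ℝ × ℝ)) : Set (ℝ × ℝ)).ncard := by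
    apply Set.ncard_le_ncard_of_injOn (fun p => (p i, p j))
    · intro p hp
      simp only [Finset.coe_product, Set.mem_prod]
      exact ⟨hmem p hp i, hmem p hp j⟩
    · intro p hp q hq h
      exact hinj p hp q hq (congrArg Prod.fst h) (congrArg Prod.snd h)
  rw [Set.ncard_coe_finset, Finset.card_product] at h1
  exact h1.trans (Nat.mul_le_mul (hVcard i) (hVcard j))

/-- If `u` has nonzero second and third coordinates, any affine plane with normal `u`
contains at most `N₁ · min(N₂, N₃)` points of the grid. -/
theorem plane_meets_grid_in_few_points (L d : Fin 3 → ℝ) (N : Fin 3 → ℕ)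
    (hL : ∀ i, 0 < L i) (hd : ∀ i, 0 < d i ∧ d i < L i)
    (hN : ∀ i, 0 < N i ∧ Even (N i))
    (u : EuclideanSpace ℝ (Fin 3)) (hu2 : u 1 ≠ 0) (hu3 : u 2 ≠ 0)
    (s : EuclideanSpace ℝ (Fin 3)) :
    ({p : EuclideanSpace ℝ (Fin 3) | ⟪u, p - s⟫ = 0} ∩ grid3 L d N).ncard ≤
      N 0 * min (N 1) (N 2) := by
  set S := ({p : EuclideanSpace ℝ (Fin 3) | ⟪u, p - s⟫ = 0} ∩ grid3 L d N) with hSdef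
  have hplane : ∀ p ∈ S, u 0 * p 0 + u 1 * p 1 + u 2 * p 2
      = u 0 * s 0 + u 1 * s 1 + u 2 * s 2 := by
    intro p hp
    have h := hp.1
    simp only [Set.mem_setOf_eq] at h
    have h2 : ⟪u, p⟫ = ⟪u, s⟫ := by
      have := inner_sub_right (𝕜 := ℝ) u p s
      rw [h] at this
      linarith [this]
    simpa [PiLp.inner_apply, RCLike.inner_apply, Fin.sum_univ_three, mul_comm] using h2
  have key2 : ∀ p ∈ S, ∀ q ∈ S, p 0 = q 0 → p 1 = q 1 → p = q := by
    intro p hp q hq h0 h1'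
    have e1 := hplane p hp
    have e2 := hplane q hq
    rw [h0, h1'] at e1
    have h2' : p 2 = q 2 := mul_left_cancel₀ hu3 (by linarith)
    ext m
    fin_cases m
    · exact h0
    · exact h1'
    · exact h2'
  have key1 : ∀ p ∈ S, ∀ q ∈ S, p 0 = q 0 → p 2 = q 2 → p = q := by
    intro p hp q hq h0 h2'
    have e1 := hplane p hp
    have e2 := hplane q hq
    rw [h0, h2'] at e1
    have h1' : p 1 = q 1 := mul_left_cancel₀ hu2 (by linarith)
    ext m
    fin_cases m
    · exact h0
    · exact h1'
    · exact h2'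
  have b1 : S.ncard ≤ N 0 * N 1 :=
    grid_card_aux L d N (fun i => (hN i).2) S Set.inter_subset_right 0 1 key2
  have b2 : S.ncard ≤ N 0 * N 2 :=
    grid_card_aux L d N (fun i => (hN i).2) S Set.inter_subset_right 0 2 key1
  rcases le_total (N 1) (N 2) with h | h
  · rwa [min_eq_left h]
  · rwa [min_eq_right h]
end

section
/- Quantitative form of the orientation proposition (Eq. (22) of the paper): for every u ∈ ℝ³ with ‖u‖ = 1 and u ∉ {±e₁, ±e₂, ±e₃}, one has J₃(u) < N₁N₂N₃·max(N₁N₂, N₂N₃, N₁N₃) = max(J₃(e₁), J₃(e₂), J₃(e₃)). -/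
open scoped RealInnerProductSpace

open Finset
open scoped Classical

namespace J3Aux

noncomputable def Xf (Li di : ℝ) (n : ℕ) : Finset ℝ :=
  (({1, -1} : Finset ℝ) ×ˢ Finset.range n).image fun p => p.1 * di + 2 * (p.2 : ℝ) * Li

lemma mem_Xf {Li di : ℝ} {n : ℕ} {x : ℝ} :
    x ∈ Xf Li di n ↔ ∃ ε : ℝ, ∃ q : ℕ, (ε = 1 ∨ ε = -1) ∧ q < n ∧ x = ε * di + 2 * q * Li := by
  simp only [Xf, mem_image, mem_product, mem_insert, mem_singleton, mem_range, Prod.exists]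
  constructor
  · rintro ⟨ε, q, ⟨hε, hq⟩, rfl⟩; exact ⟨ε, q, hε, hq, rfl⟩
  · rintro ⟨ε, q, hε, hq, rfl⟩; exact ⟨ε, q, ⟨hε, hq⟩, rfl⟩

lemma card_Xf {Li di : ℝ} (n : ℕ) (hL : 0 < Li) (hd0 : 0 < di) (hdL : di < Li) :
    (Xf Li di n).card = 2 * n := by
  rw [Xf, Finset.card_image_of_injOn]
  · rw [Finset.card_product, Finset.card_range, Finset.card_insert_of_notMem (by norm_num),
      Finset.card_singleton]
  · rintro ⟨ε, q⟩ hp ⟨ε', q'⟩ hp' h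
    simp only [mem_coe, mem_product, mem_insert, mem_singleton, mem_range] at hp hp' h
    obtain ⟨hε, hq⟩ := hp; obtain ⟨hε', hq'⟩ := hp'
    have hqq : (q : ℝ) + 1 ≤ q' ∨ (q' : ℝ) + 1 ≤ q ∨ (q:ℝ) = q' := by
      rcases lt_trichotomy q q' with h1 | h1 | h1
      · exact Or.inl (by exact_mod_cast h1)
      · exact Or.inr (Or.inr (by exact_mod_cast h1))
      · exact Or.inr (Or.inl (by exact_mod_cast h1))
    have hq2 : (q : ℝ) = q' → q = q' := by exact_mod_cast fun h => h
    rcases hε with rfl | rfl <;> rcases hε' with rfl | rfl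
    · have : (q : ℝ) = q' := by
        rcases hqq with h1 | h1 | h1
        · nlinarith
        · nlinarith
        · exact h1
      simp [hq2 this]
    · exfalso
      have h1 : (q' : ℝ) ≤ q ∨ (q : ℝ) + 1 ≤ q' := by
        rcases le_or_gt q' q with h1 | h1
        · exact Or.inl (by exact_mod_cast h1)
        · exact Or.inr (by exact_mod_cast h1)
      rcases h1 with h1 | h1 <;> nlinarith
    · exfalso
      have h1 : (q : ℝ) ≤ q' ∨ (q' : ℝ) + 1 ≤ q := by
        rcases le_or_gt q q' with h1 | h1
        · exact Or.inl (by exact_mod_cast h1)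
        · exact Or.inr (by exact_mod_cast h1)
      rcases h1 with h1 | h1 <;> nlinarith
    · have : (q : ℝ) = q' := by
        rcases hqq with h1 | h1 | h1
        · nlinarith
        · nlinarith
        · exact h1
      simp [hq2 this]

noncomputable def GF (L d : Fin 3 → ℝ) (N : Fin 3 → ℕ) : Finset (EuclideanSpace ℝ (Fin 3)) :=
  (Fintype.piFinset fun i => Xf (L i) (d i) (N i / 2)).map
    (WithLp.equiv 2 (Fin 3 → ℝ)).symm.toEmbedding

lemma mem_GF {L d : Fin 3 → ℝ} {N : Fin 3 → ℕ} {x : EuclideanSpace ℝ (Fin 3)} :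
    x ∈ GF L d N ↔ ∀ i, x i ∈ Xf (L i) (d i) (N i / 2) := by
  rw [GF, Finset.mem_map_equiv]
  simp only [Equiv.symm_symm, Fintype.mem_piFinset]
  rfl

lemma grid3_eq (L d : Fin 3 → ℝ) (N : Fin 3 → ℕ) : grid3 L d N = ↑(GF L d N) := by
  ext x
  simp only [grid3, Set.mem_setOf_eq, mem_coe, mem_GF]
  constructor
  · rintro ⟨ε, q, hε, hq, hx⟩ i
    rw [mem_Xf]
    refine ⟨ε i, (q i).toNat, hε i, ?_, ?_⟩
    · have h1 := (hq i).1
      have h2 := (hq i).2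
      omega
    · have hcast : ((q i).toNat : ℝ) = ((q i : ℤ) : ℝ) := by
        exact_mod_cast congrArg (Int.cast : ℤ → ℝ) (Int.toNat_of_nonneg (hq i).1)
      rw [hx i, hcast]
  · intro h
    choose ε q hε hq hx using fun i => mem_Xf.mp (h i)
    refine ⟨ε, fun i => (q i : ℤ), hε, ?_, ?_⟩
    · intro i
      refine ⟨Int.natCast_nonneg _, ?_⟩
      show ((q i : ℕ) : ℤ) < ((N i / 2 : ℕ) : ℤ)
      exact_mod_cast hq i
    · intro i
      rw [hx i]
      push_cast
      ring

lemma card_GF {L d : Fin 3 → ℝ} {N : Fin 3 → ℕ} (hL : ∀ i, 0 < L i)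
    (hd : ∀ i, 0 < d i ∧ d i < L i) (hN : ∀ i, Even (N i)) :
    (GF L d N).card = N 0 * N 1 * N 2 := by
  rw [GF, Finset.card_map, Fintype.card_piFinset]
  have : ∀ i, (Xf (L i) (d i) (N i / 2)).card = N i := by
    intro i
    rw [card_Xf _ (hL i) (hd i).1 (hd i).2]
    obtain ⟨r, hr⟩ := hN i
    omega
  simp only [this]
  rw [Fin.prod_univ_three]

-- generic pair-counting lemma
lemma count_pairs {α β : Type*} [DecidableEq α] [DecidableEq β] (s : Finset α) (g : α → β) :
    ((s ×ˢ s).filter fun p => g p.1 = g p.2).card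
      = ∑ c ∈ s.image g, ((s.filter fun a => g a = c).card) ^ 2 := by
  rw [Finset.card_filter, Finset.sum_product]
  have h1 : ∀ a ∈ s, (∑ b ∈ s, if g a = g b then 1 else 0)
      = ((s.filter fun b => g b = g a).card) := by
    intro a _
    rw [Finset.card_filter]
    exact Finset.sum_congr rfl fun b _ => by by_cases h : g a = g b <;> simp [h, eq_comm]
  rw [Finset.sum_congr rfl h1]
  have h2 : ∑ a ∈ s, ((s.filter fun b => g b = g a).card)
      = ∑ c ∈ s.image g, (s.filter fun a => g a = c).card • ((s.filter fun b => g b = c).card) :=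
    Finset.sum_comp (fun c => (s.filter fun b => g b = c).card) g
  rw [h2]
  exact Finset.sum_congr rfl fun c _ => by rw [smul_eq_mul, sq]

-- three pairwise distinct elements of Fin 3 cover everything
lemma univ_eq_three {i j k : Fin 3} (hij : i ≠ j) (hik : i ≠ k) (hjk : j ≠ k) :
    ({i, j, k} : Finset (Fin 3)) = Finset.univ := by
  apply Finset.eq_univ_of_card
  rw [Finset.card_insert_of_notMem (by simp [hij, hik]),
    Finset.card_insert_of_notMem (by simp [hjk]), Finset.card_singleton]
  decide

lemma sum_three {i j k : Fin 3} (hij : i ≠ j) (hik : i ≠ k) (hjk : j ≠ k) (F : Fin 3 → ℝ) :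
    ∑ l, F l = F i + F j + F k := by
  rw [← univ_eq_three hij hik hjk, Finset.sum_insert (by simp [hij, hik]),
    Finset.sum_insert (by simp [hjk]), Finset.sum_singleton, add_assoc]

lemma exists_third (i j : Fin 3) (hij : i ≠ j) :
    ∃ k, i ≠ k ∧ j ≠ k ∧ ∀ l : Fin 3, l = i ∨ l = j ∨ l = k := by
  fin_cases i <;> fin_cases j <;> simp_all <;> decide

variable {L d : Fin 3 → ℝ} {N : Fin 3 → ℕ}

lemma J3_eq (u : EuclideanSpace ℝ (Fin 3)) :
    J3 L d N u = ((GF L d N ×ˢ GF L d N).filter fun p =>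
      (⟪u, p.1⟫ : ℝ) = ⟪u, p.2⟫).card := by
  rw [J3]
  have hset : {sp : EuclideanSpace ℝ (Fin 3) × EuclideanSpace ℝ (Fin 3) |
      sp.1 ∈ grid3 L d N ∧ sp.2 ∈ grid3 L d N ∧ ⟪u, sp.1 - sp.2⟫ = 0}
      = ↑((GF L d N ×ˢ GF L d N).filter fun p => (⟪u, p.1⟫ : ℝ) = ⟪u, p.2⟫) := by
    ext sp
    simp only [Set.mem_setOf_eq, grid3_eq, mem_coe, Finset.mem_filter, Finset.mem_product,
      inner_sub_right, sub_eq_zero, and_assoc]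
  rw [hset, Set.ncard_coe_finset]

lemma J3_sum (u : EuclideanSpace ℝ (Fin 3)) :
    J3 L d N u = ∑ c ∈ (GF L d N).image (fun x => (⟪u, x⟫ : ℝ)),
      (((GF L d N).filter fun x => (⟪u, x⟫ : ℝ) = c).card) ^ 2 := by
  rw [J3_eq, count_pairs]

lemma fiber_card (hL : ∀ i, 0 < L i) (hd : ∀ i, 0 < d i ∧ d i < L i) (hN : ∀ i, Even (N i))
    (i : Fin 3) {c : ℝ} (hc : c ∈ Xf (L i) (d i) (N i / 2)) :
    ((GF L d N).filter fun x => x i = c).card = ∏ j, if j = i then 1 else N j := by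
  have key : ((GF L d N).filter fun x => x i = c) =
      (Fintype.piFinset fun j => if j = i then ({c} : Finset ℝ) else Xf (L j) (d j) (N j / 2)).map
        (WithLp.equiv 2 (Fin 3 → ℝ)).symm.toEmbedding := by
    ext x
    rw [Finset.mem_filter, Finset.mem_map_equiv]
    simp only [Equiv.symm_symm, Fintype.mem_piFinset]
    constructor
    · rintro ⟨hx, hxi⟩ j
      by_cases hj : j = i
      · subst hj; simp [hxi]
      · simpa [hj] using mem_GF.mp hx j
    · intro h
      have hxi : x i = c := by simpa using h i
      refine ⟨mem_GF.mpr fun j => ?_, hxi⟩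
      by_cases hj : j = i
      · subst hj; simpa [hxi] using hc
      · simpa [hj] using h j
  rw [key, Finset.card_map, Fintype.card_piFinset]
  refine Finset.prod_congr rfl fun j _ => ?_
  by_cases hj : j = i
  · simp [hj]
  · rw [if_neg hj, if_neg hj, card_Xf _ (hL j) (hd j).1 (hd j).2]
    obtain ⟨r, hr⟩ := hN j
    omega

lemma Xf_nonempty (hL : ∀ i, 0 < L i) (hd : ∀ i, 0 < d i ∧ d i < L i)
    (hN : ∀ i, 0 < N i ∧ Even (N i)) (i : Fin 3) :
    (Xf (L i) (d i) (N i / 2)).Nonempty := by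
  rw [← Finset.card_pos, card_Xf _ (hL i) (hd i).1 (hd i).2]
  obtain ⟨h1, r, hr⟩ := hN i
  omega

lemma image_coord (hL : ∀ i, 0 < L i) (hd : ∀ i, 0 < d i ∧ d i < L i)
    (hN : ∀ i, 0 < N i ∧ Even (N i)) (i : Fin 3) :
    (GF L d N).image (fun x => x i) = Xf (L i) (d i) (N i / 2) := by
  apply Finset.Subset.antisymm
  · intro c hc
    obtain ⟨x, hx, rfl⟩ := Finset.mem_image.mp hc
    exact mem_GF.mp hx i
  · intro c hc
    have hne := Xf_nonempty hL hd hN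
    refine Finset.mem_image.mpr ⟨(WithLp.equiv 2 (Fin 3 → ℝ)).symm
      (fun j => if j = i then c else (hne j).choose), ?_, by simp⟩
    refine mem_GF.mpr fun j => ?_
    by_cases hj : j = i
    · subst hj
      simpa using hc
    · show (if j = i then c else (hne j).choose) ∈ _
      rw [if_neg hj]
      exact (hne j).choose_spec

lemma J3_single (hL : ∀ i, 0 < L i) (hd : ∀ i, 0 < d i ∧ d i < L i)
    (hN : ∀ i, 0 < N i ∧ Even (N i)) (i : Fin 3) :
    J3 L d N (EuclideanSpace.single i 1)
      = N i * (∏ j, if j = i then 1 else N j) ^ 2 := by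
  have hg : ∀ x : EuclideanSpace ℝ (Fin 3), (⟪EuclideanSpace.single i 1, x⟫ : ℝ) = x i := by
    intro x; simp [EuclideanSpace.inner_single_left]
  rw [J3_sum]
  simp only [hg]
  rw [image_coord hL hd hN i]
  rw [Finset.sum_congr rfl fun c hc => by rw [fiber_card hL hd (fun j => (hN j).2) i hc]]
  rw [Finset.sum_const, smul_eq_mul, card_Xf _ (hL i) (hd i).1 (hd i).2]
  obtain ⟨h1, r, hr⟩ := hN i
  congr 1
  omega

lemma J3_bound (hL : ∀ i, 0 < L i) (hd : ∀ i, 0 < d i ∧ d i < L i)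
    (hN : ∀ i, 0 < N i ∧ Even (N i)) {u : EuclideanSpace ℝ (Fin 3)}
    {i j k : Fin 3} (hij : i ≠ j) (hik : i ≠ k) (hjk : j ≠ k)
    (hcov : ∀ l : Fin 3, l = i ∨ l = j ∨ l = k)
    (hui : u i ≠ 0) (huj : u j ≠ 0) :
    J3 L d N u < (N 0 * N 1 * N 2) * (N j * N k) := by
  have hNj2 : 2 ≤ N j := by obtain ⟨h1, r, hr⟩ := hN j; omega
  have hNk1 : 1 ≤ N k := (hN k).1
  -- inner product expansion
  have hg : ∀ x : EuclideanSpace ℝ (Fin 3), (⟪u, x⟫ : ℝ) = u i * x i + u j * x j + u k * x k := by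
    intro x
    have : (⟪u, x⟫ : ℝ) = ∑ l, u l * x l := by
      simp [PiLp.inner_apply]; exact Finset.sum_congr rfl fun _ _ => mul_comm _ _
    rw [this, sum_three hij hik hjk]
  set G := GF L d N with hG
  set n : ℝ → ℕ := fun c => ((G.filter fun x => (⟪u, x⟫ : ℝ) = c).card) with hn
  -- uniform fiber bound
  have bound_all : ∀ c, n c ≤ N j * N k := by
    intro c
    have : n c ≤ (Xf (L j) (d j) (N j / 2) ×ˢ Xf (L k) (d k) (N k / 2)).card := by
      apply Finset.card_le_card_of_injOn (fun x => (x j, x k))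
      · intro x hx
        rw [Finset.mem_coe, Finset.mem_filter] at hx
        exact Finset.mem_product.mpr ⟨mem_GF.mp hx.1 j, mem_GF.mp hx.1 k⟩
      · intro x hx y hy hxy
        simp only [mem_coe, Finset.mem_filter] at hx hy
        have h1 : x j = y j := congrArg Prod.fst hxy
        have h2 : x k = y k := congrArg Prod.snd hxy
        have h3 : (⟪u, x⟫ : ℝ) = ⟪u, y⟫ := by rw [hx.2, hy.2]
        rw [hg, hg, h1, h2] at h3
        have h4 : x i = y i := mul_left_cancel₀ hui (by linarith)
        apply PiLp.ext; intro l
        rcases hcov l with rfl | rfl | rfl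
        · exact h4
        · exact h1
        · exact h2
    rwa [Finset.card_product, card_Xf _ (hL j) (hd j).1 (hd j).2,
      card_Xf _ (hL k) (hd k).1 (hd k).2,
      (by obtain ⟨r, hr⟩ := (hN j).2; omega : 2 * (N j / 2) = N j),
      (by obtain ⟨r, hr⟩ := (hN k).2; omega : 2 * (N k / 2) = N k)] at this
  -- argmax point
  have hch : ∀ l : Fin 3, ∃ y ∈ Xf (L l) (d l) (N l / 2),
      ∀ z ∈ Xf (L l) (d l) (N l / 2), u l * z ≤ u l * y :=
    fun l => Finset.exists_max_image _ (fun z => u l * z) (Xf_nonempty hL hd hN l)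
  choose a ha hamax using hch
  set A : EuclideanSpace ℝ (Fin 3) := (WithLp.equiv 2 (Fin 3 → ℝ)).symm a with hA
  have hAl : ∀ l, A l = a l := fun l => rfl
  have hAG : A ∈ G := mem_GF.mpr fun l => by rw [hAl]; exact ha l
  set cA : ℝ := ⟪u, A⟫ with hcA
  -- max fiber bound
  have max_fiber : n cA ≤ N k := by
    have : n cA ≤ (Xf (L k) (d k) (N k / 2)).card := by
      apply Finset.card_le_card_of_injOn (fun x => x k)
      · intro x hx
        rw [Finset.mem_coe, Finset.mem_filter] at hx
        exact mem_GF.mp hx.1 k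
      · intro x hx y hy hxy
        simp only [mem_coe, Finset.mem_filter] at hx hy
        have key : ∀ z, z ∈ G → (⟪u, z⟫ : ℝ) = cA → z i = a i ∧ z j = a j := by
          intro z hz hzc
          have e1 : u i * z i ≤ u i * a i := hamax i _ (mem_GF.mp hz i)
          have e2 : u j * z j ≤ u j * a j := hamax j _ (mem_GF.mp hz j)
          have e3 : u k * z k ≤ u k * a k := hamax k _ (mem_GF.mp hz k)
          have e4 : u i * z i + u j * z j + u k * z k
              = u i * a i + u j * a j + u k * a k := by
            have := hzc
            rw [hg] at this
            rw [this, hcA, hg]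
            simp only [hAl]
          have e5 : u i * z i = u i * a i := by linarith
          have e6 : u j * z j = u j * a j := by linarith
          exact ⟨mul_left_cancel₀ hui e5, mul_left_cancel₀ huj e6⟩
        obtain ⟨hx1, hx2⟩ := key x hx.1 hx.2
        obtain ⟨hy1, hy2⟩ := key y hy.1 hy.2
        apply PiLp.ext; intro l
        rcases hcov l with rfl | rfl | rfl
        · rw [hx1, hy1]
        · rw [hx2, hy2]
        · exact hxy
    rwa [card_Xf _ (hL k) (hd k).1 (hd k).2,
      (by obtain ⟨r, hr⟩ := (hN k).2; omega : 2 * (N k / 2) = N k)] at this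
  -- arithmetic
  set T := G.image (fun x => (⟪u, x⟫ : ℝ)) with hT
  have hcAT : cA ∈ T := Finset.mem_image_of_mem _ hAG
  have hpos : 1 ≤ n cA := by
    rw [hn]
    apply Finset.card_pos.mpr
    exact ⟨A, Finset.mem_filter.mpr ⟨hAG, rfl⟩⟩
  set M := N 0 * N 1 * N 2 with hM
  have hsumn : ∑ c ∈ T, n c = M := by
    rw [hM, ← card_GF hL hd (fun l => (hN l).2)]
    exact (Finset.card_eq_sum_card_fiberwise fun x hx => Finset.mem_image_of_mem _ hx).symm
  have hsplit : ∑ c ∈ T, n c ^ 2 = n cA ^ 2 + ∑ c ∈ T.erase cA, n c ^ 2 :=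
    (Finset.add_sum_erase _ _ hcAT).symm
  have hsplitn : n cA + ∑ c ∈ T.erase cA, n c = M := by
    rw [← hsumn]; exact Finset.add_sum_erase _ _ hcAT
  have htail : ∑ c ∈ T.erase cA, n c ^ 2 ≤ (N j * N k) * ∑ c ∈ T.erase cA, n c := by
    rw [Finset.mul_sum]
    apply Finset.sum_le_sum
    intro c _
    rw [sq]
    exact Nat.mul_le_mul_right _ (bound_all c)
  have hhead : n cA ^ 2 < (N j * N k) * n cA := by
    have h1 : n cA ^ 2 ≤ n cA * N k := by rw [sq]; exact Nat.mul_le_mul_left _ max_fiber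
    have h2 : N k < N j * N k := by nlinarith
    calc n cA ^ 2 ≤ n cA * N k := h1
      _ < n cA * (N j * N k) := mul_lt_mul_of_pos_left h2 hpos
      _ = (N j * N k) * n cA := Nat.mul_comm _ _
  have : J3 L d N u < (N j * N k) * M := by
    rw [J3_sum, ← hT, hsplit]
    calc n cA ^ 2 + ∑ c ∈ T.erase cA, n c ^ 2
        < (N j * N k) * n cA + (N j * N k) * ∑ c ∈ T.erase cA, n c :=
          Nat.add_lt_add_of_lt_of_le hhead htail
      _ = (N j * N k) * (n cA + ∑ c ∈ T.erase cA, n c) := (Nat.mul_add _ _ _).symm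
      _ = (N j * N k) * M := by rw [hsplitn]
  rwa [Nat.mul_comm] at this

lemma two_nonzero {u : EuclideanSpace ℝ (Fin 3)} (hu : ‖u‖ = 1)
    (hnot : ∀ i : Fin 3, u ≠ EuclideanSpace.single i 1 ∧ u ≠ -EuclideanSpace.single i 1) :
    ∃ i j : Fin 3, i ≠ j ∧ u i ≠ 0 ∧ u j ≠ 0 := by
  by_contra hcon
  push_neg at hcon
  -- sum of squares is 1
  have hsum : ∑ l, u l ^ 2 = 1 := by
    have h1 : ‖u‖ ^ 2 = ∑ l, u l ^ 2 := by
      rw [EuclideanSpace.norm_eq]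
      rw [Real.sq_sqrt (by positivity)]
      simp [sq_abs]
    rw [hu] at h1
    linarith [h1]
  -- there is a nonzero coordinate
  have hex : ∃ i, u i ≠ 0 := by
    by_contra h
    push_neg at h
    rw [Finset.sum_eq_zero (fun l _ => by rw [h l, sq, mul_zero])] at hsum
    norm_num at hsum
  obtain ⟨i, hi⟩ := hex
  have hzero : ∀ j, j ≠ i → u j = 0 := by
    intro j hj
    exact hcon i j (fun h => hj h.symm) hi
  have hsum2 : u i ^ 2 = 1 := by
    rw [← hsum, Finset.sum_eq_single i (fun l _ hl => by rw [hzero l hl, sq, mul_zero])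
      (fun h => absurd (Finset.mem_univ i) h)]
  have hui : u i = 1 ∨ u i = -1 := by
    have h0 : (u i - 1) * (u i + 1) = 0 := by nlinarith
    rcases mul_eq_zero.mp h0 with h | h
    · exact Or.inl (by linarith)
    · exact Or.inr (by linarith)
  rcases hui with h1 | h1
  · apply (hnot i).1
    apply PiLp.ext; intro l
    by_cases hl : l = i
    · subst hl; rw [h1, EuclideanSpace.single_apply, if_pos rfl]
    · rw [hzero l hl, EuclideanSpace.single_apply, if_neg hl]
  · apply (hnot i).2
    apply PiLp.ext; intro l
    show u l = -(EuclideanSpace.single i (1:ℝ)) l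
    by_cases hl : l = i
    · subst hl; simp [h1, EuclideanSpace.single_apply]
    · simp [hzero l hl, EuclideanSpace.single_apply, hl]

lemma mul_max (m a b : ℕ) : m * max a b = max (m * a) (m * b) := by
  rcases le_total a b with h | h
  · rw [max_eq_right h, max_eq_right (Nat.mul_le_mul_left _ h)]
  · rw [max_eq_left h, max_eq_left (Nat.mul_le_mul_left _ h)]

lemma prod_le_max (N : Fin 3 → ℕ) {j k : Fin 3} (hjk : j ≠ k) :
    N j * N k ≤ max (N 0 * N 1) (max (N 1 * N 2) (N 0 * N 2)) := by
  fin_cases j <;> fin_cases k <;> (try exact absurd rfl hjk) <;>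
    first
    | exact le_max_left _ _
    | exact le_max_of_le_right (le_max_left _ _)
    | exact le_max_of_le_right (le_max_right _ _)
    | (rw [Nat.mul_comm]; exact le_max_left _ _)
    | (rw [Nat.mul_comm]; exact le_max_of_le_right (le_max_left _ _))
    | (rw [Nat.mul_comm]; exact le_max_of_le_right (le_max_right _ _))

end J3Aux

/-- Quantitative form of the orientation proposition: every unit vector that is not a
signed standard basis vector has strictly smaller score than
`N₁N₂N₃ · max(N₁N₂, N₂N₃, N₁N₃)`, which equals `max(J₃(e₁), J₃(e₂), J₃(e₃))`. -/
theorem J3_lt_max_of_not_axis (L d : Fin 3 → ℝ) (N : Fin 3 → ℕ)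
    (hL : ∀ i, 0 < L i) (hd : ∀ i, 0 < d i ∧ d i < L i)
    (hN : ∀ i, 0 < N i ∧ Even (N i))
    (u : EuclideanSpace ℝ (Fin 3)) (hu : ‖u‖ = 1)
    (hnot : ∀ i : Fin 3, u ≠ EuclideanSpace.single i 1 ∧ u ≠ -EuclideanSpace.single i 1) :
    J3 L d N u < N 0 * N 1 * N 2 * max (N 0 * N 1) (max (N 1 * N 2) (N 0 * N 2)) ∧
    N 0 * N 1 * N 2 * max (N 0 * N 1) (max (N 1 * N 2) (N 0 * N 2)) =
      max (J3 L d N (EuclideanSpace.single 0 1))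
        (max (J3 L d N (EuclideanSpace.single 1 1)) (J3 L d N (EuclideanSpace.single 2 1))) := by
  constructor
  · obtain ⟨i, j, hij, hui, huj⟩ := J3Aux.two_nonzero hu hnot
    obtain ⟨k, hik, hjk, hcov⟩ := J3Aux.exists_third i j hij
    calc J3 L d N u < (N 0 * N 1 * N 2) * (N j * N k) :=
          J3Aux.J3_bound hL hd hN hij hik hjk hcov hui huj
      _ ≤ N 0 * N 1 * N 2 * max (N 0 * N 1) (max (N 1 * N 2) (N 0 * N 2)) :=
          Nat.mul_le_mul_left _ (J3Aux.prod_le_max N hjk)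
  · have e0 : J3 L d N (EuclideanSpace.single 0 1) = (N 0 * N 1 * N 2) * (N 1 * N 2) := by
      rw [J3Aux.J3_single hL hd hN 0]
      simp [Fin.prod_univ_three]
      ring
    have e1 : J3 L d N (EuclideanSpace.single 1 1) = (N 0 * N 1 * N 2) * (N 0 * N 2) := by
      rw [J3Aux.J3_single hL hd hN 1]
      simp [Fin.prod_univ_three]
      ring
    have e2 : J3 L d N (EuclideanSpace.single 2 1) = (N 0 * N 1 * N 2) * (N 0 * N 1) := by
      rw [J3Aux.J3_single hL hd hN 2]
      simp [Fin.prod_univ_three]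
      ring
    rw [e0, e1, e2, J3Aux.mul_max, J3Aux.mul_max,
      max_comm ((N 0 * N 1 * N 2) * (N 0 * N 1)), max_assoc]
end

section
/- The maximum of the orthogonality score over the unit sphere equals N₁N₂N₃·max(N₁N₂, N₂N₃, N₁N₃), and it is attained exactly at the vectors ±eᵢ for which the complementary product NⱼNₖ (with {i, j, k} = {1, 2, 3}) is maximal. -/
open scoped RealInnerProductSpace

namespace J3aux

open Finset

noncomputable def Si (L d : Fin 3 → ℝ) (N : Fin 3 → ℕ) (i : Fin 3) : Finset ℝ :=
  ((Finset.range (N i / 2)).image fun q : ℕ => d i + 2 * (q : ℝ) * L i) ∪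
  ((Finset.range (N i / 2)).image fun q : ℕ => -d i + 2 * (q : ℝ) * L i)

theorem card_Si (L d : Fin 3 → ℝ) (N : Fin 3 → ℕ) (i : Fin 3)
    (hL : 0 < L i) (hd : 0 < d i ∧ d i < L i) : (Si L d N i).card = 2 * (N i / 2) := by
  have hinj : ∀ e : ℝ, Set.InjOn (fun q : ℕ => e + 2 * (q : ℝ) * L i) ↑(Finset.range (N i / 2)) := by
    intro e q _ q' _ h
    simp only at h
    have : (q : ℝ) = q' := by
      have h2 : 2 * (q:ℝ) * L i = 2 * q' * L i := by linarith
      have := mul_right_cancel₀ (ne_of_gt hL) h2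
      linarith
    exact_mod_cast this
  have hdisj : Disjoint ((Finset.range (N i / 2)).image fun q : ℕ => d i + 2 * (q : ℝ) * L i)
      ((Finset.range (N i / 2)).image fun q : ℕ => -d i + 2 * (q : ℝ) * L i) := by
    rw [Finset.disjoint_left]
    rintro a ha hb
    simp only [Finset.mem_image, Finset.mem_range] at ha hb
    obtain ⟨q, hq, rfl⟩ := ha
    obtain ⟨q', hq', h⟩ := hb
    rcases le_or_gt (q' : ℝ) q with h1 | h1
    · nlinarith [hd.1, hd.2, hL]
    · have : (q : ℝ) + 1 ≤ q' := by
        have : q < q' := by exact_mod_cast h1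
        exact_mod_cast Nat.succ_le_of_lt this
      nlinarith [hd.1, hd.2, hL]
  rw [Si, Finset.card_union_of_disjoint hdisj,
    Finset.card_image_of_injOn (hinj _), Finset.card_image_of_injOn (hinj _),
    Finset.card_range]
  ring

theorem mem_Si (L d : Fin 3 → ℝ) (N : Fin 3 → ℕ) (i : Fin 3) (x : ℝ) :
    x ∈ Si L d N i ↔ ∃ (ε : ℝ) (q : ℤ), (ε = 1 ∨ ε = -1) ∧ (0 ≤ q ∧ q < (N i / 2 : ℕ)) ∧
      x = ε * d i + 2 * (q : ℝ) * L i := by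
  simp only [Si, Finset.mem_union, Finset.mem_image, Finset.mem_range]
  constructor
  · rintro (⟨q, hq, rfl⟩ | ⟨q, hq, rfl⟩)
    · exact ⟨1, q, Or.inl rfl, ⟨Int.ofNat_nonneg q, by exact_mod_cast hq⟩, by push_cast; ring⟩
    · exact ⟨-1, q, Or.inr rfl, ⟨Int.ofNat_nonneg q, by exact_mod_cast hq⟩, by push_cast; ring⟩
  · rintro ⟨ε, q, (rfl | rfl), ⟨hq0, hq1⟩, rfl⟩
    · exact Or.inl ⟨q.toNat, by omega, by
        have h : ((q.toNat : ℕ) : ℝ) = (q : ℝ) := by exact_mod_cast Int.toNat_of_nonneg hq0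
        rw [h]; ring⟩
    · exact Or.inr ⟨q.toNat, by omega, by
        have h : ((q.toNat : ℕ) : ℝ) = (q : ℝ) := by exact_mod_cast Int.toNat_of_nonneg hq0
        rw [h]; ring⟩


variable (L d : Fin 3 → ℝ) (N : Fin 3 → ℕ)

theorem card_Si' (i : Fin 3) (hL : ∀ i, 0 < L i) (hd : ∀ i, 0 < d i ∧ d i < L i)
    (hN : ∀ i, 0 < N i ∧ Even (N i)) : (Si L d N i).card = N i := by
  rw [card_Si L d N i (hL i) (hd i)]
  obtain ⟨m, hm⟩ := (hN i).2
  omega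

noncomputable def toE : (Fin 3 → ℝ) ↪ EuclideanSpace ℝ (Fin 3) :=
  ⟨WithLp.toLp 2, WithLp.toLp_injective 2⟩

theorem mem_map_toE (S : Fin 3 → Finset ℝ) (x : EuclideanSpace ℝ (Fin 3)) :
    x ∈ (Fintype.piFinset S).map toE ↔ ∀ i, x i ∈ S i := by
  simp only [Finset.mem_map, Fintype.mem_piFinset]
  constructor
  · rintro ⟨a, ha, rfl⟩; exact ha
  · intro h; exact ⟨x.ofLp, h, rfl⟩

noncomputable def GFin : Finset (EuclideanSpace ℝ (Fin 3)) :=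
  (Fintype.piFinset (Si L d N)).map toE

theorem mem_GFin (x : EuclideanSpace ℝ (Fin 3)) :
    x ∈ GFin L d N ↔ ∀ i, x i ∈ Si L d N i := mem_map_toE _ x

theorem grid3_eq : grid3 L d N = ↑(GFin L d N) := by
  ext x
  simp only [grid3, Set.mem_setOf_eq, Finset.mem_coe, mem_GFin, mem_Si]
  constructor
  · rintro ⟨ε, q, hε, hq, hx⟩ i
    exact ⟨ε i, q i, hε i, hq i, hx i⟩
  · intro h
    choose ε q hε hq hx using h
    exact ⟨ε, q, hε, hq, hx⟩

theorem card_GFin (hL : ∀ i, 0 < L i) (hd : ∀ i, 0 < d i ∧ d i < L i)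
    (hN : ∀ i, 0 < N i ∧ Even (N i)) : (GFin L d N).card = ∏ i, N i := by
  rw [GFin, Finset.card_map, Fintype.card_piFinset]
  exact Finset.prod_congr rfl fun i _ => card_Si' L d N i hL hd hN

theorem inner_eq (u p : EuclideanSpace ℝ (Fin 3)) : ⟪u, p⟫ = ∑ i, u i * p i := by
  simp [PiLp.inner_apply, RCLike.inner_apply, mul_comm]

theorem J3_eq (u : EuclideanSpace ℝ (Fin 3)) :
    J3 L d N u = ((GFin L d N ×ˢ GFin L d N).filter fun sp => ⟪u, sp.1⟫ = ⟪u, sp.2⟫).card := by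
  rw [J3, show {sp : EuclideanSpace ℝ (Fin 3) × EuclideanSpace ℝ (Fin 3) |
      sp.1 ∈ grid3 L d N ∧ sp.2 ∈ grid3 L d N ∧ ⟪u, sp.1 - sp.2⟫ = 0} =
      ↑((GFin L d N ×ˢ GFin L d N).filter fun sp => ⟪u, sp.1⟫ = ⟪u, sp.2⟫) by
    ext sp
    simp [grid3_eq, Finset.mem_filter, Finset.mem_product, inner_sub_right, sub_eq_zero,
      and_assoc]]
  exact Set.ncard_coe_finset _

noncomputable def fib (u : EuclideanSpace ℝ (Fin 3)) (c : ℝ) :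
    Finset (EuclideanSpace ℝ (Fin 3)) :=
  (GFin L d N).filter fun p => ⟪u, p⟫ = c

theorem J3_eq_sum (u : EuclideanSpace ℝ (Fin 3)) :
    J3 L d N u = ∑ s ∈ GFin L d N, (fib L d N u ⟪u, s⟫).card := by
  rw [J3_eq, Finset.card_filter, Finset.sum_product]
  refine Finset.sum_congr rfl fun s _ => ?_
  rw [fib, Finset.card_filter]
  exact Finset.sum_congr rfl fun p _ => by simp [eq_comm]

theorem card_update (i : Fin 3) (b : Finset ℝ) (hL : ∀ i, 0 < L i)
    (hd : ∀ i, 0 < d i ∧ d i < L i) (hN : ∀ i, 0 < N i ∧ Even (N i)) :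
    (Fintype.piFinset (Function.update (Si L d N) i b)).card
      = b.card * ∏ j ∈ univ.erase i, N j := by
  rw [Fintype.card_piFinset, ← Finset.mul_prod_erase univ _ (mem_univ i)]
  congr 1
  · rw [Function.update_self]
  · refine Finset.prod_congr rfl fun j hj => ?_
    rw [Function.update_of_ne (Finset.ne_of_mem_erase hj)]
    exact card_Si' L d N j hL hd hN

theorem update_injOn (u : EuclideanSpace ℝ (Fin 3)) (i : Fin 3) (hui : u i ≠ 0) (c : ℝ) :
    Set.InjOn (fun p : EuclideanSpace ℝ (Fin 3) => Function.update p i 0)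
      ↑(fib L d N u c) := by
  intro p hp p' hp' h
  simp only [Finset.mem_coe, fib, Finset.mem_filter] at hp hp'
  have hco : ∀ j, j ≠ i → p j = p' j := by
    intro j hj
    have := congrFun h j
    simpa [Function.update_of_ne hj] using this
  have hsum : ∑ j, u j * p j = ∑ j, u j * p' j := by
    rw [← inner_eq, ← inner_eq, hp.2, hp'.2]
  have hpi : p i = p' i := by
    have h1 := Finset.add_sum_erase univ (fun j => u j * p j) (mem_univ i)
    have h2 := Finset.add_sum_erase univ (fun j => u j * p' j) (mem_univ i)
    have he : ∑ j ∈ univ.erase i, u j * p j = ∑ j ∈ univ.erase i, u j * p' j :=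
      Finset.sum_congr rfl fun j hj => by rw [hco j (Finset.ne_of_mem_erase hj)]
    have : u i * p i = u i * p' i := by
      simp only at h1 h2
      linarith
    exact mul_left_cancel₀ hui this
  refine PiLp.ext fun j => ?_
  by_cases hj : j = i
  · subst hj; exact hpi
  · exact hco j hj

theorem update_maps (u : EuclideanSpace ℝ (Fin 3)) (c : ℝ) (i : Fin 3)
    (p : EuclideanSpace ℝ (Fin 3)) (hp : p ∈ fib L d N u c) :
    Function.update p i 0 ∈ Fintype.piFinset (Function.update (Si L d N) i ({0} : Finset ℝ)) := by
  rw [Fintype.mem_piFinset]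
  intro j
  by_cases hj : j = i
  · subst hj; simp
  · rw [Function.update_of_ne hj, Function.update_of_ne hj]
    exact (mem_GFin L d N p).1 (Finset.mem_filter.1 hp).1 j

theorem fib_card_le (u : EuclideanSpace ℝ (Fin 3)) (i : Fin 3) (hui : u i ≠ 0) (c : ℝ)
    (hL : ∀ i, 0 < L i) (hd : ∀ i, 0 < d i ∧ d i < L i) (hN : ∀ i, 0 < N i ∧ Even (N i)) :
    (fib L d N u c).card ≤ ∏ j ∈ univ.erase i, N j := by
  have h := Finset.card_le_card_of_injOn (fun p : EuclideanSpace ℝ (Fin 3) => Function.update p i 0)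
    (fun p hp => update_maps L d N u c i p hp) (update_injOn L d N u i hui c)
  rwa [card_update L d N i _ hL hd hN, Finset.card_singleton, one_mul] at h


theorem univ_eq (i j k : Fin 3) (hij : i ≠ j) (hik : i ≠ k) (hjk : j ≠ k) :
    (univ : Finset (Fin 3)) = {i, j, k} := by
  symm
  apply Finset.eq_univ_of_card
  rw [Finset.card_insert_of_notMem (by simp [hij, hik]),
    Finset.card_insert_of_notMem (by simp [hjk]), Finset.card_singleton]
  rfl

theorem erase_eq (i j k : Fin 3) (hij : i ≠ j) (hik : i ≠ k) (hjk : j ≠ k) :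
    (univ : Finset (Fin 3)).erase i = {j, k} := by
  rw [univ_eq i j k hij hik hjk]
  exact Finset.erase_insert (by simp [hij, hik])

theorem prod_erase_eq (i j k : Fin 3) (hij : i ≠ j) (hik : i ≠ k) (hjk : j ≠ k) :
    ∏ l ∈ (univ : Finset (Fin 3)).erase i, N l = N j * N k := by
  rw [erase_eq i j k hij hik hjk, Finset.prod_insert (by simp [hjk]), Finset.prod_singleton]

theorem sum3 (f : Fin 3 → ℝ) (i j k : Fin 3) (hij : i ≠ j) (hik : i ≠ k) (hjk : j ≠ k) :
    ∑ l, f l = f i + f j + f k := by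
  rw [univ_eq i j k hij hik hjk, Finset.sum_insert (by simp [hij, hik]),
    Finset.sum_insert (by simp [hjk]), Finset.sum_singleton, add_assoc]

theorem pair_le (i j : Fin 3) (hij : i ≠ j) :
    N i * N j ≤ max (N 0 * N 1) (max (N 1 * N 2) (N 0 * N 2)) := by
  fin_cases i <;> fin_cases j <;> simp only [le_max_iff] <;>
    first
    | exact absurd rfl hij
    | exact Or.inl le_rfl
    | exact Or.inr (Or.inl le_rfl)
    | exact Or.inr (Or.inr le_rfl)
    | exact Or.inl (le_of_eq (mul_comm _ _))
    | exact Or.inr (Or.inl (le_of_eq (mul_comm _ _)))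
    | exact Or.inr (Or.inr (le_of_eq (mul_comm _ _)))

theorem inner_axis (u : EuclideanSpace ℝ (Fin 3)) (i : Fin 3) (hz : ∀ j, j ≠ i → u j = 0)
    (p : EuclideanSpace ℝ (Fin 3)) : ⟪u, p⟫ = u i * p i := by
  rw [inner_eq]
  exact Finset.sum_eq_single i (fun j _ hj => by rw [hz j hj, zero_mul])
    (fun h => absurd (mem_univ i) h)

theorem fib_axis (u : EuclideanSpace ℝ (Fin 3)) (i : Fin 3) (hui : u i ≠ 0)
    (hz : ∀ j, j ≠ i → u j = 0) (s : EuclideanSpace ℝ (Fin 3)) (hs : s ∈ GFin L d N) :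
    fib L d N u ⟪u, s⟫
      = (Fintype.piFinset (Function.update (Si L d N) i ({s i} : Finset ℝ))).map toE := by
  ext p
  simp only [fib, Finset.mem_filter, mem_GFin]
  have hmem : p ∈ (Fintype.piFinset (Function.update (Si L d N) i ({s i} : Finset ℝ))).map toE ↔
      ∀ j, p j ∈ Function.update (Si L d N) i ({s i} : Finset ℝ) j := mem_map_toE _ p
  rw [hmem, inner_axis u i hz p, inner_axis u i hz s]
  constructor
  · rintro ⟨hpG, hpc⟩ j
    by_cases hj : j = i
    · subst hj
      rw [Function.update_self]
      simp [mul_left_cancel₀ hui hpc]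
    · rw [Function.update_of_ne hj]
      exact hpG j
  · intro h
    have hpi : p i = s i := by
      have := h i
      rwa [Function.update_self, Finset.mem_singleton] at this
    refine ⟨fun j => ?_, by rw [hpi]⟩
    by_cases hj : j = i
    · rw [hj, hpi]
      exact (mem_GFin L d N s).1 hs i
    · have := h j
      rwa [Function.update_of_ne hj] at this

theorem J3_axis (u : EuclideanSpace ℝ (Fin 3)) (i : Fin 3) (hui : u i ≠ 0)
    (hz : ∀ j, j ≠ i → u j = 0)
    (hL : ∀ i, 0 < L i) (hd : ∀ i, 0 < d i ∧ d i < L i) (hN : ∀ i, 0 < N i ∧ Even (N i)) :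
    J3 L d N u = (∏ l, N l) * ∏ j ∈ (univ : Finset (Fin 3)).erase i, N j := by
  rw [J3_eq_sum]
  have hstep : ∀ s ∈ GFin L d N,
      (fib L d N u ⟪u, s⟫).card = ∏ j ∈ (univ : Finset (Fin 3)).erase i, N j := by
    intro s hs
    rw [fib_axis L d N u i hui hz s hs, Finset.card_map, card_update L d N i _ hL hd hN,
      Finset.card_singleton, one_mul]
  rw [Finset.sum_congr rfl hstep, Finset.sum_const, smul_eq_mul, card_GFin L d N hL hd hN]


theorem third (i j : Fin 3) (hij : i ≠ j) :
    ∃ k, i ≠ k ∧ j ≠ k ∧ ∀ l : Fin 3, l = i ∨ l = j ∨ l = k := by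
  revert hij; revert i j; decide

theorem not_eq_of_two (u : EuclideanSpace ℝ (Fin 3)) (i j : Fin 3) (hij : i ≠ j)
    (hi : u i ≠ 0) (hj : u j ≠ 0)
    (hL : ∀ i, 0 < L i) (hd : ∀ i, 0 < d i ∧ d i < L i) (hN : ∀ i, 0 < N i ∧ Even (N i)) :
    J3 L d N u ≠ (∏ l, N l) * max (N 0 * N 1) (max (N 1 * N 2) (N 0 * N 2)) := by
  intro heq
  set MP := max (N 0 * N 1) (max (N 1 * N 2) (N 0 * N 2)) with hMPdef
  obtain ⟨k, hik, hjk, hcov⟩ := third i j hij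
  have hfle : ∀ s ∈ GFin L d N, (fib L d N u ⟪u, s⟫).card ≤ MP := by
    intro s _
    refine le_trans (fib_card_le L d N u i hi _ hL hd hN) ?_
    rw [prod_erase_eq N i j k hij hik hjk]
    exact pair_le N j k hjk
  have hsum : ∑ s ∈ GFin L d N, (fib L d N u ⟪u, s⟫).card = ∑ s ∈ GFin L d N, MP := by
    rw [← J3_eq_sum, heq, Finset.sum_const, smul_eq_mul, card_GFin L d N hL hd hN]
  have hall : ∀ s ∈ GFin L d N, (fib L d N u ⟪u, s⟫).card = MP :=
    fun s hs => (Finset.sum_eq_sum_iff_of_le hfle).1 hsum s hs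
  have hGne : (GFin L d N).Nonempty := by
    rw [← Finset.card_pos, card_GFin L d N hL hd hN]
    exact Finset.prod_pos fun l _ => (hN l).1
  obtain ⟨s₀, hs₀⟩ := hGne
  have b1 : MP ≤ N j * N k := by
    rw [← hall s₀ hs₀]
    exact le_trans (fib_card_le L d N u i hi _ hL hd hN)
      (le_of_eq (prod_erase_eq N i j k hij hik hjk))
  have b2 : MP ≤ N i * N k := by
    rw [← hall s₀ hs₀]
    exact le_trans (fib_card_le L d N u j hj _ hL hd hN)
      (le_of_eq (prod_erase_eq N j i k (Ne.symm hij) hjk hik))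
  have e1 : MP = N j * N k := le_antisymm b1 (pair_le N j k hjk)
  have e2 : MP = N i * N k := le_antisymm b2 (pair_le N i k hik)
  have hNij : N i = N j := Nat.eq_of_mul_eq_mul_right (hN k).1 (by rw [← e2, e1])
  have hfull : ∀ c : ℝ, (fib L d N u c).card = MP → ∀ t ∈ Si L d N j, ∀ w ∈ Si L d N k,
      ∃ r ∈ Si L d N i, u i * r + u j * t + u k * w = c := by
    intro c hcard t ht w hw
    have hsurj := Finset.surj_on_of_inj_on_of_card_le
      (s := fib L d N u c)
      (t := Fintype.piFinset (Function.update (Si L d N) i ({0} : Finset ℝ)))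
      (fun p _ => Function.update p i 0)
      (fun p hp => update_maps L d N u c i p hp)
      (fun p₁ p₂ h₁ h₂ h => update_injOn L d N u i hi c (Finset.mem_coe.2 h₁)
        (Finset.mem_coe.2 h₂) h)
      (by rw [card_update L d N i _ hL hd hN, Finset.card_singleton, one_mul,
            prod_erase_eq N i j k hij hik hjk, hcard]
          exact le_of_eq e1.symm)
    set x : Fin 3 → ℝ :=
      Function.update (Function.update (Function.update (fun _ => (0:ℝ)) i 0) j t) k w with hxd
    have hxi : x i = 0 := by
      rw [hxd]
      rw [Function.update_of_ne hik, Function.update_of_ne hij, Function.update_self]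
    have hxj : x j = t := by
      rw [hxd, Function.update_of_ne hjk, Function.update_self]
    have hxk : x k = w := by
      rw [hxd, Function.update_self]
    have hxmem : x ∈ Fintype.piFinset (Function.update (Si L d N) i ({0} : Finset ℝ)) := by
      have hm : x ∈ Fintype.piFinset (Function.update (Si L d N) i ({0} : Finset ℝ)) ↔
          ∀ l, x l ∈ Function.update (Si L d N) i ({0} : Finset ℝ) l := Fintype.mem_piFinset
      rw [hm]
      intro l
      rcases hcov l with rfl | rfl | rfl
      · rw [Function.update_self, hxi]; exact Finset.mem_singleton_self 0
      · rw [Function.update_of_ne (Ne.symm hij), hxj]; exact ht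
      · rw [Function.update_of_ne (Ne.symm hik), hxk]; exact hw
    obtain ⟨p, hp, hpx⟩ := hsurj x hxmem
    have hpj : p j = t := by
      have h1 := congrFun hpx j
      simp only [Function.update_of_ne (Ne.symm hij), hxj] at h1
      exact h1.symm
    have hpk : p k = w := by
      have h1 := congrFun hpx k
      simp only [Function.update_of_ne (Ne.symm hik), hxk] at h1
      exact h1.symm
    obtain ⟨hpG, hpc⟩ := Finset.mem_filter.1 hp
    refine ⟨p i, (mem_GFin L d N p).1 hpG i, ?_⟩
    rw [← hpj, ← hpk, ← hpc, inner_eq]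
    exact (sum3 (fun l => u l * p l) i j k hij hik hjk).symm
  obtain ⟨r₁, hr₁S, hr₁ne⟩ := Finset.exists_mem_ne (s := Si L d N i) (by
      rw [card_Si' L d N i hL hd hN]
      obtain ⟨m, hm⟩ := (hN i).2
      have := (hN i).1
      omega) (s₀ i)
  set s₁ : EuclideanSpace ℝ (Fin 3) := WithLp.toLp 2 (Function.update s₀ i r₁) with hs₁d
  have hs₁i : s₁ i = r₁ := by rw [hs₁d, WithLp.ofLp_toLp, Function.update_self]
  have hs₁j : s₁ j = s₀ j := by rw [hs₁d, WithLp.ofLp_toLp, Function.update_of_ne (Ne.symm hij)]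
  have hs₁k : s₁ k = s₀ k := by rw [hs₁d, WithLp.ofLp_toLp, Function.update_of_ne (Ne.symm hik)]
  have hs₁ : s₁ ∈ GFin L d N := by
    rw [mem_GFin]
    intro l
    by_cases hl : l = i
    · rw [hl, hs₁i]; exact hr₁S
    · rw [hs₁d, WithLp.ofLp_toLp, Function.update_of_ne hl]; exact (mem_GFin L d N s₀).1 hs₀ l
  have hcdiff : ⟪u, s₁⟫ - ⟪u, s₀⟫ = u i * (r₁ - s₀ i) := by
    rw [inner_eq, inner_eq, sum3 (fun l => u l * s₁ l) i j k hij hik hjk,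
      sum3 (fun l => u l * s₀ l) i j k hij hik hjk]
    simp only
    rw [hs₁i, hs₁j, hs₁k]
    ring
  have hcne : ⟪u, s₁⟫ ≠ ⟪u, s₀⟫ := by
    intro h
    rw [h, sub_self] at hcdiff
    have h2 := (mul_eq_zero.1 hcdiff.symm).resolve_left hi
    exact hr₁ne (by linarith)
  obtain ⟨w₀, hw₀⟩ : (Si L d N k).Nonempty := by
    rw [← Finset.card_pos, card_Si' L d N k hL hd hN]
    exact (hN k).1
  have h0 := hfull ⟪u, s₀⟫ (hall s₀ hs₀)
  have h1 := hfull ⟪u, s₁⟫ (hall s₁ hs₁)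
  set φ : ℝ → ℝ → ℝ := fun c t => (c - u k * w₀ - u j * t) / u i with hφd
  have hφmem : ∀ c, (∀ t ∈ Si L d N j, ∀ w ∈ Si L d N k,
      ∃ r ∈ Si L d N i, u i * r + u j * t + u k * w = c) →
      ∀ t ∈ Si L d N j, φ c t ∈ Si L d N i := by
    intro c hc' t ht
    obtain ⟨r, hr, hre⟩ := hc' t ht w₀ hw₀
    have hrφ : r = φ c t := by
      rw [hφd]
      simp only
      rw [eq_div_iff hi]
      linarith
    rwa [← hrφ]
  have hφinj : ∀ c, Set.InjOn (φ c) ↑(Si L d N j) := by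
    intro c t _ t' _ h
    rw [hφd] at h
    simp only at h
    rw [div_eq_div_iff hi hi] at h
    have h3 := mul_right_cancel₀ hi h
    have h2 : u j * t = u j * t' := by linarith
    exact mul_left_cancel₀ hj h2
  have himg2 : ∀ c, (∀ t ∈ Si L d N j, φ c t ∈ Si L d N i) →
      (Si L d N j).image (φ c) = Si L d N i := by
    intro c hmem
    apply Finset.eq_of_subset_of_card_le
    · intro x hx
      obtain ⟨t, ht, rfl⟩ := Finset.mem_image.1 hx
      exact hmem t ht
    · rw [Finset.card_image_of_injOn (hφinj c), card_Si' L d N i hL hd hN,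
        card_Si' L d N j hL hd hN]
      exact le_of_eq hNij
  have hsumeq : ∀ c, (∀ t ∈ Si L d N j, φ c t ∈ Si L d N i) →
      ∑ t ∈ Si L d N j, φ c t = ∑ x ∈ Si L d N i, x := by
    intro c hmem
    rw [← himg2 c hmem, Finset.sum_image
      (fun x hx y hy hxy => hφinj c (Finset.mem_coe.2 hx) (Finset.mem_coe.2 hy) hxy)]
  have hS0 := hsumeq ⟪u, s₀⟫ (hφmem _ h0)
  have hS1 := hsumeq ⟪u, s₁⟫ (hφmem _ h1)
  have hdiff : ∑ t ∈ Si L d N j, (φ ⟪u, s₁⟫ t - φ ⟪u, s₀⟫ t) = 0 := by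
    rw [Finset.sum_sub_distrib, hS0, hS1, sub_self]
  have hconst : ∀ t, φ ⟪u, s₁⟫ t - φ ⟪u, s₀⟫ t = (⟪u, s₁⟫ - ⟪u, s₀⟫) / u i := by
    intro t
    rw [hφd]
    simp only
    rw [div_sub_div_same]
    congr 1
    ring
  rw [Finset.sum_congr rfl (fun t _ => hconst t), Finset.sum_const, nsmul_eq_mul,
    card_Si' L d N j hL hd hN] at hdiff
  have hne : (⟪u, s₁⟫ - ⟪u, s₀⟫) / u i ≠ 0 := div_ne_zero (sub_ne_zero.2 hcne) hi
  rcases mul_eq_zero.1 hdiff with h | h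
  · have : (0:ℝ) < N j := by exact_mod_cast (hN j).1
    linarith
  · exact hne h

end J3aux

/-- The maximum of the orthogonality score over the unit sphere equals
`N₁N₂N₃ · max(N₁N₂, N₂N₃, N₁N₃)`, it is attained, and it is attained exactly at the
signed basis vectors `±eᵢ` whose complementary product `∏_{j ≠ i} Nⱼ` is maximal. -/
theorem J3_max_on_sphere (L d : Fin 3 → ℝ) (N : Fin 3 → ℕ)
    (hL : ∀ i, 0 < L i) (hd : ∀ i, 0 < d i ∧ d i < L i)
    (hN : ∀ i, 0 < N i ∧ Even (N i)) :
    (∀ v : EuclideanSpace ℝ (Fin 3), ‖v‖ = 1 →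
      J3 L d N v ≤ N 0 * N 1 * N 2 * max (N 0 * N 1) (max (N 1 * N 2) (N 0 * N 2))) ∧
    (∃ v : EuclideanSpace ℝ (Fin 3), ‖v‖ = 1 ∧
      J3 L d N v = N 0 * N 1 * N 2 * max (N 0 * N 1) (max (N 1 * N 2) (N 0 * N 2))) ∧
    (∀ u : EuclideanSpace ℝ (Fin 3), ‖u‖ = 1 →
      (J3 L d N u = N 0 * N 1 * N 2 * max (N 0 * N 1) (max (N 1 * N 2) (N 0 * N 2)) ↔
        ∃ i : Fin 3, (u = EuclideanSpace.single i 1 ∨ u = -EuclideanSpace.single i 1) ∧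
          ∏ j ∈ Finset.univ.erase i, N j =
            max (N 0 * N 1) (max (N 1 * N 2) (N 0 * N 2)))) := by
  have hcases : ∀ i : Fin 3, i = 0 ∨ i = 1 ∨ i = 2 := by decide
  have pe0 : ∏ l ∈ (Finset.univ : Finset (Fin 3)).erase 0, N l = N 1 * N 2 :=
    J3aux.prod_erase_eq N 0 1 2 (by decide) (by decide) (by decide)
  have pe1 : ∏ l ∈ (Finset.univ : Finset (Fin 3)).erase 1, N l = N 0 * N 2 :=
    J3aux.prod_erase_eq N 1 0 2 (by decide) (by decide) (by decide)
  have pe2 : ∏ l ∈ (Finset.univ : Finset (Fin 3)).erase 2, N l = N 0 * N 1 :=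
    J3aux.prod_erase_eq N 2 0 1 (by decide) (by decide) (by decide)
  have hprod : ∏ l, N l = N 0 * N 1 * N 2 := Fin.prod_univ_three N
  have hMple : ∀ i : Fin 3, ∏ l ∈ (Finset.univ : Finset (Fin 3)).erase i, N l
      ≤ max (N 0 * N 1) (max (N 1 * N 2) (N 0 * N 2)) := by
    intro i
    rcases hcases i with rfl | rfl | rfl
    · rw [pe0]; exact J3aux.pair_le N 1 2 (by decide)
    · rw [pe1]; exact J3aux.pair_le N 0 2 (by decide)
    · rw [pe2]; exact J3aux.pair_le N 0 1 (by decide)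
  have hexists_ne : ∀ v : EuclideanSpace ℝ (Fin 3), ‖v‖ = 1 → ∃ i, v i ≠ 0 := by
    intro v hv
    by_contra hco
    push_neg at hco
    have hv0 : v = 0 := PiLp.ext fun i => by simp [hco i]
    rw [hv0, norm_zero] at hv
    exact one_ne_zero hv.symm
  have haxis : ∀ (u : EuclideanSpace ℝ (Fin 3)) (i : Fin 3), u i ≠ 0 →
      (∀ j, j ≠ i → u j = 0) →
      J3 L d N u = N 0 * N 1 * N 2 * ∏ l ∈ (Finset.univ : Finset (Fin 3)).erase i, N l := by
    intro u i hui hz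
    rw [J3aux.J3_axis L d N u i hui hz hL hd hN, hprod]
  have hbound : ∀ v : EuclideanSpace ℝ (Fin 3), ‖v‖ = 1 →
      J3 L d N v ≤ N 0 * N 1 * N 2 * max (N 0 * N 1) (max (N 1 * N 2) (N 0 * N 2)) := by
    intro v hv
    obtain ⟨i, hi⟩ := hexists_ne v hv
    rw [J3aux.J3_eq_sum]
    calc ∑ s ∈ J3aux.GFin L d N, (J3aux.fib L d N v ⟪v, s⟫).card
        ≤ ∑ _s ∈ J3aux.GFin L d N, max (N 0 * N 1) (max (N 1 * N 2) (N 0 * N 2)) :=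
          Finset.sum_le_sum fun s _ =>
            le_trans (J3aux.fib_card_le L d N v i hi _ hL hd hN) (hMple i)
      _ = N 0 * N 1 * N 2 * max (N 0 * N 1) (max (N 1 * N 2) (N 0 * N 2)) := by
          rw [Finset.sum_const, smul_eq_mul, J3aux.card_GFin L d N hL hd hN, hprod]
  have hsingle_ne : ∀ i : Fin 3, (EuclideanSpace.single i (1:ℝ)) i ≠ 0 := by
    intro i; simp [EuclideanSpace.single_apply]
  have hsingle_z : ∀ i j : Fin 3, j ≠ i → (EuclideanSpace.single i (1:ℝ)) j = 0 := by
    intro i j hj; simp [EuclideanSpace.single_apply, hj]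
  have hnsingle_ne : ∀ i : Fin 3, (-EuclideanSpace.single i (1:ℝ)) i ≠ 0 := by
    intro i; simp [PiLp.neg_apply, EuclideanSpace.single_apply]
  have hnsingle_z : ∀ i j : Fin 3, j ≠ i → (-EuclideanSpace.single i (1:ℝ)) j = 0 := by
    intro i j hj; simp [PiLp.neg_apply, EuclideanSpace.single_apply, hj]
  refine ⟨hbound, ?_, ?_⟩
  · -- existence
    have hexMP : ∃ i : Fin 3, ∏ l ∈ (Finset.univ : Finset (Fin 3)).erase i, N l
        = max (N 0 * N 1) (max (N 1 * N 2) (N 0 * N 2)) := by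
      rcases max_choice (N 0 * N 1) (max (N 1 * N 2) (N 0 * N 2)) with h | h
      · exact ⟨2, by rw [pe2, h]⟩
      · rcases max_choice (N 1 * N 2) (N 0 * N 2) with h2 | h2
        · exact ⟨0, by rw [pe0, h, h2]⟩
        · exact ⟨1, by rw [pe1, h, h2]⟩
    obtain ⟨i0, hi0⟩ := hexMP
    refine ⟨EuclideanSpace.single i0 1, ?_, ?_⟩
    · simp [EuclideanSpace.norm_single]
    · rw [haxis _ i0 (hsingle_ne i0) (hsingle_z i0), hi0]
  · -- characterization
    intro u hu
    constructor
    · intro hJ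
      obtain ⟨i, hi⟩ := hexists_ne u hu
      have hz : ∀ j, j ≠ i → u j = 0 := by
        intro j hj
        by_contra hjne
        exact J3aux.not_eq_of_two L d N u i j (Ne.symm hj) hi hjne hL hd hN
          (by rw [hprod]; exact hJ)
      have h1 := haxis u i hi hz
      rw [hJ] at h1
      have hMPeq : ∏ l ∈ (Finset.univ : Finset (Fin 3)).erase i, N l
          = max (N 0 * N 1) (max (N 1 * N 2) (N 0 * N 2)) :=
        (Nat.eq_of_mul_eq_mul_left
          (Nat.mul_pos (Nat.mul_pos (hN 0).1 (hN 1).1) (hN 2).1) h1).symm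
      have husingle : u = EuclideanSpace.single i (u i) := by
        refine PiLp.ext fun l => ?_
        by_cases hl : l = i
        · rw [hl]; simp [EuclideanSpace.single_apply]
        · simp [EuclideanSpace.single_apply, hl, hz l hl]
      have hnormi : ‖u i‖ = 1 := by
        rw [husingle, EuclideanSpace.norm_single] at hu
        exact hu
      rw [Real.norm_eq_abs] at hnormi
      rcases (abs_eq zero_le_one).1 hnormi with h | h
      · exact ⟨i, Or.inl (by rw [husingle, h]), hMPeq⟩
      · refine ⟨i, Or.inr ?_, hMPeq⟩
        rw [husingle, h]
        refine PiLp.ext fun l => ?_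
        by_cases hl : l = i
        · rw [hl]; simp [PiLp.neg_apply, EuclideanSpace.single_apply]
        · simp [PiLp.neg_apply, EuclideanSpace.single_apply, hl]
    · rintro ⟨i, hor, hMPeq⟩
      rcases hor with rfl | rfl
      · rw [haxis _ i (hsingle_ne i) (hsingle_z i), hMPeq]
      · rw [haxis _ i (hnsingle_ne i) (hnsingle_z i), hMPeq]
end
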